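/- Define f : (0,∞) → ℝ by f(x) = min{|1 - x|, |1 - 1/x|}. Then for positive reals x_1,...,x_m and nonnegative weights λ_1,...,λ_m summing to 1: f(∏_h x_h^{λ_h}) ≤ max{f(x_1),...,f(x_m)} (where the max is over a nonempty finite set, m ≥ 1). -/

import Mathlib

theorem stmt_6 (m : ℕ) (hm : 0 < m)
    (hne : (Finset.univ : Finset (Fin m)).Nonempty)
    (x : Fin m → ℝ) (hx : ∀ h, 0 < x h)
    (l : Fin m → ℝ) (hl : ∀ h, 0 ≤ l h) (hsum : ∑ h, l h = 1) :
    (fun t : ℝ => min |1 - t| |1 - 1 / t|) (∏ h, (x h) ^ (l h)) ≤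
      Finset.univ.sup' hne (fun h => min |1 - x h| |1 - 1 / x h|) := by
  set P := ∏ h, (x h) ^ (l h) with hPdef
  have hPpos : 0 < P := Finset.prod_pos fun i _ => Real.rpow_pos_of_pos (hx i) _
  have hlogP : Real.log P = ∑ h, l h * Real.log (x h) := by
    rw [hPdef, Real.log_prod (fun i _ => ne_of_gt (Real.rpow_pos_of_pos (hx i) _))]
    exact Finset.sum_congr rfl fun i _ => Real.log_rpow (hx i) _
  simp only
  rcases le_total P 1 with hP1 | hP1
  · obtain ⟨j, -, hj⟩ := Finset.exists_min_image Finset.univ x hne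
    have hxjP : x j ≤ P := by
      have h1 : Real.log (x j) ≤ Real.log P := by
        rw [hlogP]
        calc Real.log (x j) = ∑ h, l h * Real.log (x j) := by
              rw [← Finset.sum_mul, hsum, one_mul]
          _ ≤ ∑ h, l h * Real.log (x h) :=
              Finset.sum_le_sum fun i _ => mul_le_mul_of_nonneg_left
                (Real.log_le_log (hx j) (hj i (Finset.mem_univ i))) (hl i)
      exact (Real.log_le_log_iff (hx j) hPpos).mp h1
    have hxj1 : x j ≤ 1 := hxjP.trans hP1
    have hxjpos := hx j
    refine le_trans ?_ (Finset.le_sup' (fun h => min |1 - x h| |1 - 1 / x h|) (Finset.mem_univ j))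
    calc min |1 - P| |1 - 1 / P| ≤ |1 - P| := min_le_left _ _
      _ = 1 - P := abs_of_nonneg (by linarith)
      _ ≤ 1 - x j := by linarith
      _ ≤ min |1 - x j| |1 - 1 / x j| := by
          refine le_min (le_abs_self _) ?_
          have h2 : 1 / x j - 1 ≤ |1 - 1 / x j| := by
            rw [abs_sub_comm]; exact le_abs_self _
          have h3 : 1 - x j ≤ 1 / x j - 1 := by
            rw [div_sub' (ne_of_gt hxjpos), le_div_iff₀ hxjpos]
            nlinarith
          linarith
  · obtain ⟨j, -, hj⟩ := Finset.exists_max_image Finset.univ x hne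
    have hxjP : P ≤ x j := by
      have h1 : Real.log P ≤ Real.log (x j) := by
        rw [hlogP]
        calc ∑ h, l h * Real.log (x h)
            ≤ ∑ h, l h * Real.log (x j) :=
              Finset.sum_le_sum fun i _ => mul_le_mul_of_nonneg_left
                (Real.log_le_log (hx i) (hj i (Finset.mem_univ i))) (hl i)
          _ = Real.log (x j) := by rw [← Finset.sum_mul, hsum, one_mul]
      exact (Real.log_le_log_iff hPpos (hx j)).mp h1
    have hxj1 : 1 ≤ x j := hP1.trans hxjP
    have hxjpos := hx j
    have hPinv : 1 / x j ≤ 1 / P := one_div_le_one_div_of_le hPpos hxjP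
    have hPinv1 : 1 / P ≤ 1 := by rw [div_le_one hPpos]; exact hP1
    refine le_trans ?_ (Finset.le_sup' (fun h => min |1 - x h| |1 - 1 / x h|) (Finset.mem_univ j))
    calc min |1 - P| |1 - 1 / P| ≤ |1 - 1 / P| := min_le_right _ _
      _ = 1 - 1 / P := abs_of_nonneg (by linarith)
      _ ≤ 1 - 1 / x j := by linarith
      _ ≤ min |1 - x j| |1 - 1 / x j| := by
          refine le_min ?_ (le_abs_self _)
          have h2 : x j - 1 ≤ |1 - x j| := by
            rw [abs_sub_comm]; exact le_abs_self _
          have h3 : 1 - 1 / x j ≤ x j - 1 := by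
            rw [sub_div' (ne_of_gt hxjpos), div_le_iff₀ hxjpos]
            nlinarith
          linarith
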